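/- The function θ(λ) = -1 + Artanh(√(1-4λ))/√(1-4λ) is strictly decreasing on (0, 1/4). -/

import Mathlib

open Real Filter Set

lemma hasDerivAt_A {x : ℝ} (hx : x ∈ Ioo (-1:ℝ) 1) :
    HasDerivAt (fun x => (1/2)*(Real.log (1+x) - Real.log (1-x))) (1/(1-x^2)) x := by
  obtain ⟨h1, h2⟩ := hx
  have e1 : (1:ℝ)+x ≠ 0 := by nlinarith
  have e2 : (1:ℝ)-x ≠ 0 := by nlinarith
  have e3 : (1:ℝ)-x^2 ≠ 0 := by nlinarith
  have d1 : HasDerivAt (fun x : ℝ => Real.log (1+x)) (1/(1+x)) x := by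
    simpa using (HasDerivAt.log ((hasDerivAt_id x).const_add 1) e1)
  have d2 : HasDerivAt (fun x : ℝ => Real.log (1-x)) ((-1)/(1-x)) x := by
    simpa using (HasDerivAt.log ((hasDerivAt_id x).const_sub 1) e2)
  have := ((d1.sub d2).const_mul (1/2 : ℝ))
  refine this.congr_deriv ?_
  field_simp
  ring

lemma hasDerivAt_Q {x : ℝ} (hx : x ∈ Ioo (-1:ℝ) 1) :
    HasDerivAt (fun x : ℝ => x/(1-x^2)) ((1+x^2)/(1-x^2)^2) x := by
  obtain ⟨h1, h2⟩ := hx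
  have e3 : (1:ℝ)-x^2 ≠ 0 := by nlinarith
  have d1 : HasDerivAt (fun x : ℝ => 1-x^2) (-(2*x)) x := by
    simpa using ((hasDerivAt_pow 2 x).const_sub 1)
  have := (hasDerivAt_id x).div d1 e3
  refine this.congr_deriv ?_
  simp only [id]
  field_simp
  ring

lemma A_lt_Q {x : ℝ} (hx : x ∈ Ioo (0:ℝ) 1) :
    (1/2)*(Real.log (1+x) - Real.log (1-x)) < x/(1-x^2) := by
  set H : ℝ → ℝ := fun x => x/(1-x^2) - (1/2)*(Real.log (1+x) - Real.log (1-x)) with hH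
  have key : ∀ y ∈ Ioo (-1:ℝ) 1, HasDerivAt H (2*y^2/(1-y^2)^2) y := by
    intro y hy
    have := (hasDerivAt_Q hy).sub (hasDerivAt_A hy)
    refine this.congr_deriv ?_
    have e3 : (1:ℝ)-y^2 ≠ 0 := by nlinarith [hy.1, hy.2]
    field_simp
    ring
  have hmono : StrictMonoOn H (Ico (0:ℝ) 1) := by
    apply strictMonoOn_of_deriv_pos (convex_Ico 0 1)
    · intro y hy
      exact (key y ⟨by linarith [hy.1], hy.2⟩).continuousAt.continuousWithinAt
    · intro y hy
      rw [interior_Ico] at hy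
      rw [(key y ⟨by linarith [hy.1], hy.2⟩).deriv]
      have e3 : (0:ℝ) < 1-y^2 := by nlinarith [hy.1, hy.2]
      have hy0 : (0:ℝ) < y := hy.1
      positivity
  have h0 : H 0 = 0 := by simp [hH]
  have := hmono (by constructor <;> norm_num) ⟨le_of_lt hx.1, hx.2⟩ hx.1
  rw [h0] at this
  simp only [hH] at this
  linarith

lemma g_mono : StrictMonoOn (fun x => (1/2)*(Real.log (1+x) - Real.log (1-x)) / x) (Ioo (0:ℝ) 1) := by
  apply strictMonoOn_of_deriv_pos (convex_Ioo 0 1)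
  · intro y hy
    have : HasDerivAt (fun x => (1/2)*(Real.log (1+x) - Real.log (1-x)) / x)
        ((1/(1-y^2)*y - (1/2)*(Real.log (1+y) - Real.log (1-y))*1)/y^2) y :=
      (hasDerivAt_A ⟨by linarith [hy.1], hy.2⟩).div (hasDerivAt_id y) (ne_of_gt hy.1)
    exact this.continuousAt.continuousWithinAt
  · intro y hy
    rw [interior_Ioo] at hy
    have d : HasDerivAt (fun x => (1/2)*(Real.log (1+x) - Real.log (1-x)) / x)
        ((1/(1-y^2)*y - (1/2)*(Real.log (1+y) - Real.log (1-y))*1)/y^2) y :=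
      (hasDerivAt_A ⟨by linarith [hy.1], hy.2⟩).div (hasDerivAt_id y) (ne_of_gt hy.1)
    rw [d.deriv]
    have e3 : (0:ℝ) < 1-y^2 := by nlinarith [hy.1, hy.2]
    have := A_lt_Q hy
    have hnum : 0 < 1/(1-y^2)*y - (1/2)*(Real.log (1+y) - Real.log (1-y))*1 := by
      have : y/(1-y^2) = 1/(1-y^2)*y := by ring
      linarith [A_lt_Q hy]
    have hy0 : (0:ℝ) < y := hy.1
    positivity

noncomputable def artanh (x : ℝ) : ℝ := (1/2) * Real.log ((1+x)/(1-x))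

noncomputable def thetaF (l : ℝ) : ℝ := -1 + _root_.artanh (Real.sqrt (1-4*l)) / Real.sqrt (1-4*l)

theorem stmt2 : StrictAntiOn thetaF (Set.Ioo (0:ℝ) (1/4)) := by
  intro a ha b hb hab
  set x := Real.sqrt (1-4*b)
  set y := Real.sqrt (1-4*a)
  have hb1 : (0:ℝ) < 1-4*b := by linarith [hb.2]
  have ha1 : (0:ℝ) < 1-4*a := by linarith [ha.2]
  have hx : x ∈ Ioo (0:ℝ) 1 := ⟨Real.sqrt_pos.mpr hb1, (Real.sqrt_lt' one_pos).mpr (by nlinarith [hb.1])⟩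
  have hy : y ∈ Ioo (0:ℝ) 1 := ⟨Real.sqrt_pos.mpr ha1, (Real.sqrt_lt' one_pos).mpr (by nlinarith [ha.1])⟩
  have hxy : x < y := Real.sqrt_lt_sqrt (le_of_lt hb1) (by linarith)
  have key : ∀ z ∈ Ioo (0:ℝ) 1, _root_.artanh z / z = (1/2)*(Real.log (1+z) - Real.log (1-z)) / z := by
    intro z hz
    have e1 : (1:ℝ)+z ≠ 0 := by nlinarith [hz.1]
    have e2 : (1:ℝ)-z ≠ 0 := by nlinarith [hz.2]
    rw [_root_.artanh, Real.log_div e1 e2]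
  have := g_mono hx hy hxy
  simp only [thetaF]
  rw [key x hx, key y hy]
  linarith
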